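/- arXiv:1812.11201 — 3 statements merged into one kernel-verified Lean document; each statement's English description precedes it below -/
import Mathlib

section
/- Let Ω^t, Ω be Polish spaces and f_t : Ω^t → closed subsets of Ω be a measurable closed-valued correspondence (i.e., {ω : f_t(ω) ∩ O ≠ ∅} is Borel for every open O ⊆ Ω). Define 𝒫_t(ω) = {P ∈ 𝔓(Ω) : supp(P) ⊆ f_t(ω)}. Then the set graph(𝒫_t) = {(ω, P) : P ∈ 𝒫_t(ω)} is a Borel subset of Ω^t × 𝔓(Ω). -/
open MeasureTheory Topology

open Set Filter in
lemma closed_null_set {Ω : Type*}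
    [TopologicalSpace Ω] [PolishSpace Ω] [MeasurableSpace Ω] [BorelSpace Ω]
    {U : Set Ω} (hU : IsOpen U) :
    IsClosed {P : ProbabilityMeasure Ω | (P : Measure Ω) U = 0} := by
  letI := TopologicalSpace.upgradeIsCompletelyMetrizable Ω
  rw [isClosed_iff_clusterPt]
  intro μ hμ
  have hL : Filter.NeBot (𝓝 μ ⊓ Filter.principal
      {P : ProbabilityMeasure Ω | (P : Measure Ω) U = 0}) := hμ
  set L := 𝓝 μ ⊓ Filter.principal {P : ProbabilityMeasure Ω | (P : Measure Ω) U = 0}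
  have htend : Tendsto (id : ProbabilityMeasure Ω → ProbabilityMeasure Ω) L (𝓝 μ) :=
    tendsto_id.mono_left inf_le_left
  have hlim : (μ : Measure Ω) U ≤ L.liminf fun P : ProbabilityMeasure Ω ↦ (P : Measure Ω) U :=
    ProbabilityMeasure.le_liminf_measure_open_of_tendsto htend hU
  have hev : ∀ᶠ P : ProbabilityMeasure Ω in L, (P : Measure Ω) U ≤ 0 :=
    Filter.eventually_inf_principal.mpr (Filter.Eventually.of_forall fun P hP => le_of_eq hP)
  have : L.liminf (fun P : ProbabilityMeasure Ω ↦ (P : Measure Ω) U) ≤ 0 :=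
    Filter.liminf_le_of_frequently_le' hev.frequently
  exact le_antisymm (hlim.trans this) zero_le

/-- Let `Ωt, Ω` be Polish spaces and `ft` a measurable
closed-valued correspondence from `Ωt` to subsets of `Ω`. Define
`𝒫_t(ω) = {P : supp P ⊆ ft ω}`; since `ft ω` is closed this is the set of
`P` with `P((ft ω)ᶜ) = 0`. Then the graph `{(ω, P) | P ∈ 𝒫_t(ω)}` is a Borel
subset of `Ωt × 𝔓(Ω)` (product of the Borel σ-algebras, with the weak
topology on probability measures). -/
theorem stmt1 {Ωt Ω : Type*}
    [TopologicalSpace Ωt] [PolishSpace Ωt] [MeasurableSpace Ωt] [BorelSpace Ωt]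
    [TopologicalSpace Ω] [PolishSpace Ω] [MeasurableSpace Ω] [BorelSpace Ω]
    (ft : Ωt → Set Ω) (hclosed : ∀ ω, IsClosed (ft ω))
    (hmeas : ∀ O : Set Ω, IsOpen O → MeasurableSet {ω | (ft ω ∩ O).Nonempty}) :
    MeasurableSet[(inferInstance : MeasurableSpace Ωt).prod
        (borel (ProbabilityMeasure Ω))]
      {p : Ωt × ProbabilityMeasure Ω |
        ∀ O : Set Ω, IsOpen O → O ∩ ft p.1 = ∅ → (p.2 : Measure Ω) O = 0} := by
  letI : MeasurableSpace (ProbabilityMeasure Ω) := borel (ProbabilityMeasure Ω)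
  haveI : BorelSpace (ProbabilityMeasure Ω) := ⟨rfl⟩
  obtain ⟨B, hBc, -, hB⟩ := TopologicalSpace.exists_countable_basis Ω
  have hset : {p : Ωt × ProbabilityMeasure Ω |
        ∀ O : Set Ω, IsOpen O → O ∩ ft p.1 = ∅ → (p.2 : Measure Ω) O = 0}
      = ⋂ U ∈ B, ({ω | (ft ω ∩ U).Nonempty} ×ˢ Set.univ ∪
          Set.univ ×ˢ {P : ProbabilityMeasure Ω | (P : Measure Ω) U = 0}) := by
    ext p
    simp only [Set.mem_setOf_eq, Set.mem_iInter, Set.mem_union, Set.mem_prod, Set.mem_univ,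
      and_true, true_and]
    constructor
    · intro h U hU
      by_cases hne : (ft p.1 ∩ U).Nonempty
      · exact Or.inl hne
      · refine Or.inr (h U (hB.isOpen hU) ?_)
        rw [Set.inter_comm]
        exact Set.not_nonempty_iff_eq_empty.mp hne
    · intro h O hO hdisj
      rw [hB.open_eq_sUnion' hO]
      have hcnt : ({s ∈ B | s ⊆ O} : Set (Set Ω)).Countable := hBc.mono (Set.sep_subset _ _)
      rw [Set.sUnion_eq_biUnion]
      refine (measure_biUnion_null_iff hcnt).mpr fun s hs => ?_
      rcases h s hs.1 with h1 | h1
      · exfalso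
        rcases h1 with ⟨x, hx1, hx2⟩
        have : x ∈ O ∩ ft p.1 := ⟨hs.2 hx2, hx1⟩
        rw [hdisj] at this
        exact this
      · exact h1
  rw [hset]
  refine MeasurableSet.biInter hBc fun U hU => MeasurableSet.union ?_ ?_
  · exact ((hmeas U (hB.isOpen hU)).prod MeasurableSet.univ)
  · exact MeasurableSet.univ.prod (closed_null_set (hB.isOpen hU)).measurableSet
end

section
/- Let K ⊆ ℝ^{d+1} be defined as K = { (H, c) ∈ L × [0, x − π₀] : x − c + H·ΔS ≥ π₁ 𝒫-q.s. }, where L ⊆ ℝ^d is a linear subspace such that H·ΔS = 0 𝒫-q.s. implies H ∈ L^⊥ for H ∈ ℝ^d, and assume the no-arbitrage condition: H·ΔS ≥ 0 𝒫-q.s. implies H·ΔS = 0 𝒫-q.s. Then K is convex, closed, and bounded (hence compact) in ℝ^{d+1}. -/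
open MeasureTheory Set Filter
open scoped RealInnerProductSpace Topology

/-- A property `p` holds `Pc`-quasi-surely if its failure set is `Pc`-polar,
i.e. `P`-null for every `P ∈ Pc` (as outer measure). -/
def QuasiSurely {Ω : Type*} [MeasurableSpace Ω] (Pc : Set (Measure Ω))
    (p : Ω → Prop) : Prop :=
  ∀ P ∈ Pc, P {ω | ¬ p ω} = 0

/-- With `K = {(H,c) ∈ L × [0, x − π₀] : x − c + H·ΔS ≥ π₁ Pc-q.s.}`,
where `L` is a linear subspace such that `H·ΔS = 0` q.s. implies `H ∈ L^⊥`,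
and under no-arbitrage (`H·ΔS ≥ 0` q.s. implies `H·ΔS = 0` q.s.), the set `K`
is convex, closed and bounded, hence compact, in `ℝ^{d+1}`. -/
theorem stmt7 {Ω : Type*} [MeasurableSpace Ω] {d : ℕ}
    (Pc : Set (Measure Ω)) (hprob : ∀ P ∈ Pc, IsProbabilityMeasure P)
    (ΔS : Ω → EuclideanSpace ℝ (Fin d)) (π₁ : Ω → ℝ) (x π₀ : ℝ)
    (L : Submodule ℝ (EuclideanSpace ℝ (Fin d)))
    (hL : ∀ H : EuclideanSpace ℝ (Fin d),
      QuasiSurely Pc (fun ω => ⟪H, ΔS ω⟫ = 0) → H ∈ Lᗮ)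
    (hNA : ∀ H : EuclideanSpace ℝ (Fin d),
      QuasiSurely Pc (fun ω => 0 ≤ ⟪H, ΔS ω⟫) →
      QuasiSurely Pc (fun ω => ⟪H, ΔS ω⟫ = 0))
    (K : Set (EuclideanSpace ℝ (Fin d) × ℝ))
    (hK : K = {p | p.1 ∈ L ∧ p.2 ∈ Icc 0 (x - π₀) ∧
      QuasiSurely Pc (fun ω => π₁ ω ≤ x - p.2 + ⟪p.1, ΔS ω⟫)})
    (hne : K.Nonempty) :
    Convex ℝ K ∧ IsClosed K ∧ Bornology.IsBounded K ∧ IsCompact K := by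
  subst hK
  -- Convexity
  have hconv : Convex ℝ {p : EuclideanSpace ℝ (Fin d) × ℝ | p.1 ∈ L ∧
      p.2 ∈ Icc 0 (x - π₀) ∧
      QuasiSurely Pc (fun ω => π₁ ω ≤ x - p.2 + ⟪p.1, ΔS ω⟫)} := by
    rintro p hp q hq a b ha hb hab
    refine ⟨L.add_mem (L.smul_mem a hp.1) (L.smul_mem b hq.1),
      (convex_Icc 0 (x - π₀)) hp.2.1 hq.2.1 ha hb hab, ?_⟩
    intro P hP
    refine measure_mono_null ?_ (measure_union_null (hp.2.2 P hP) (hq.2.2 P hP))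
    intro ω hω
    simp only [mem_setOf_eq] at hω
    by_contra h
    simp only [mem_union, mem_setOf_eq, not_or, not_not] at h
    apply hω
    have h1 := mul_le_mul_of_nonneg_left h.1 ha
    have h2 := mul_le_mul_of_nonneg_left h.2 hb
    have hsm : (a • p + b • q).1 = a • p.1 + b • q.1 := rfl
    have hsm2 : (a • p + b • q).2 = a * p.2 + b * q.2 := rfl
    rw [hsm, hsm2, inner_add_left, real_inner_smul_left, real_inner_smul_left]
    have hπ : a * π₁ ω + b * π₁ ω = π₁ ω := by rw [← add_mul, hab, one_mul]
    have hx : a * x + b * x = x := by rw [← add_mul, hab, one_mul]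
    linarith [h1, h2, hπ, hx]
  -- Closedness
  have hclosed : IsClosed {p : EuclideanSpace ℝ (Fin d) × ℝ | p.1 ∈ L ∧
      p.2 ∈ Icc 0 (x - π₀) ∧
      QuasiSurely Pc (fun ω => π₁ ω ≤ x - p.2 + ⟪p.1, ΔS ω⟫)} := by
    apply IsSeqClosed.isClosed
    intro u p hu hup
    have h1 : Filter.Tendsto (fun n => (u n).1) atTop (𝓝 p.1) :=
      (continuous_fst.continuousAt.tendsto).comp hup
    have h2 : Filter.Tendsto (fun n => (u n).2) atTop (𝓝 p.2) :=
      (continuous_snd.continuousAt.tendsto).comp hup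
    refine ⟨?_, ?_, ?_⟩
    · exact (Submodule.closed_of_finiteDimensional L).mem_of_tendsto h1
        (Eventually.of_forall fun n => (hu n).1)
    · exact isClosed_Icc.mem_of_tendsto h2 (Eventually.of_forall fun n => (hu n).2.1)
    · intro P hP
      refine measure_mono_null ?_
        (measure_iUnion_null fun n => (hu n).2.2 P hP)
      intro ω hω
      simp only [mem_setOf_eq] at hω
      by_contra h
      simp only [mem_iUnion, mem_setOf_eq, not_exists, not_not] at h
      apply hω
      have htend : Filter.Tendsto (fun n => x - (u n).2 + ⟪(u n).1, ΔS ω⟫) atTop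
          (𝓝 (x - p.2 + ⟪p.1, ΔS ω⟫)) :=
        ((tendsto_const_nhds.sub h2).add (h1.inner tendsto_const_nhds))
      exact ge_of_tendsto' htend h
  -- Boundedness
  have hbdd : Bornology.IsBounded {p : EuclideanSpace ℝ (Fin d) × ℝ | p.1 ∈ L ∧
      p.2 ∈ Icc 0 (x - π₀) ∧
      QuasiSurely Pc (fun ω => π₁ ω ≤ x - p.2 + ⟪p.1, ΔS ω⟫)} := by
    rw [isBounded_iff_forall_norm_le]
    by_contra hcon
    push_neg at hcon
    -- construct an unbounded sequence in K
    have hsel : ∀ n : ℕ, ∃ p : EuclideanSpace ℝ (Fin d) × ℝ,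
        (p.1 ∈ L ∧ p.2 ∈ Icc 0 (x - π₀) ∧
        QuasiSurely Pc (fun ω => π₁ ω ≤ x - p.2 + ⟪p.1, ΔS ω⟫)) ∧
        max (x - π₀) 0 + n < ‖p‖ := by
      intro n
      obtain ⟨p, hpK, hpn⟩ := hcon (max (x - π₀) 0 + n)
      exact ⟨p, hpK, hpn⟩
    choose u hu hun using hsel
    -- the first component has large norm
    have hHn : ∀ n : ℕ, (n : ℝ) < ‖(u n).1‖ := by
      intro n
      have hc : |(u n).2| ≤ max (x - π₀) 0 := by
        rw [abs_le]
        constructor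
        · have := (hu n).2.1.1; linarith [le_max_right (x - π₀) 0]
        · exact le_trans (hu n).2.1.2 (le_max_left _ _)
      have hnorm : ‖u n‖ = max ‖(u n).1‖ ‖(u n).2‖ := rfl
      have h0 : (0:ℝ) ≤ max (x - π₀) 0 := le_max_right _ _
      rcases le_or_gt ‖(u n).1‖ ‖(u n).2‖ with hle | hlt
      · exfalso
        have := hun n
        rw [hnorm, max_eq_right hle] at this
        have : max (x - π₀) 0 + n < |(u n).2| := this
        have hn0 : (0:ℝ) ≤ (n:ℝ) := Nat.cast_nonneg n
        linarith
      · have := hun n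
        rw [hnorm, max_eq_left hlt.le] at this
        have hn0 : (0:ℝ) ≤ (n:ℝ) := Nat.cast_nonneg n
        linarith
    have hHpos : ∀ n : ℕ, (0:ℝ) < ‖(u n).1‖ := fun n =>
      lt_of_le_of_lt (Nat.cast_nonneg n) (hHn n)
    have hHne : ∀ n : ℕ, (u n).1 ≠ 0 := fun n => by
      intro h0
      have := hHpos n
      rw [h0, norm_zero] at this
      exact lt_irrefl _ this
    -- normalized sequence on the unit sphere
    set G : ℕ → EuclideanSpace ℝ (Fin d) := fun n => ‖(u n).1‖⁻¹ • (u n).1 with hGdef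
    have hGsphere : ∀ n, G n ∈ Metric.sphere (0 : EuclideanSpace ℝ (Fin d)) 1 := by
      intro n
      simp only [mem_sphere_iff_norm, sub_zero]
      exact norm_smul_inv_norm (hHne n)
    obtain ⟨g, hgsph, φ, hφ, hgt⟩ :=
      (isCompact_sphere (0 : EuclideanSpace ℝ (Fin d)) 1).tendsto_subseq hGsphere
    have hgnorm : ‖g‖ = 1 := by
      simpa [mem_sphere_iff_norm, sub_zero] using hgsph
    -- g ∈ L
    have hGL : ∀ n, G n ∈ L := fun n => L.smul_mem _ (hu n).1
    have hgL : g ∈ L :=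
      (Submodule.closed_of_finiteDimensional L).mem_of_tendsto hgt
        (Eventually.of_forall fun n => hGL (φ n))
    -- quasi-surely 0 ≤ ⟪g, ΔS ω⟫
    have hqs : QuasiSurely Pc (fun ω => 0 ≤ ⟪g, ΔS ω⟫) := by
      intro P hP
      refine measure_mono_null ?_
        (measure_iUnion_null fun n => (hu (φ n)).2.2 P hP)
      intro ω hω
      simp only [mem_setOf_eq] at hω
      by_contra h
      simp only [mem_iUnion, mem_setOf_eq, not_exists, not_not] at h
      apply hω
      -- lower bounds
      have hlow : ∀ n : ℕ,
          (π₁ ω - x + (u (φ n)).2) / ‖(u (φ n)).1‖ ≤ ⟪G (φ n), ΔS ω⟫ := by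
        intro n
        have hn := h n
        have hpos := hHpos (φ n)
        rw [div_le_iff₀ hpos]
        have : ⟪G (φ n), ΔS ω⟫ = ‖(u (φ n)).1‖⁻¹ * ⟪(u (φ n)).1, ΔS ω⟫ := by
          rw [hGdef]; exact real_inner_smul_left _ _ _
        rw [this, mul_comm, ← mul_assoc, mul_inv_cancel₀ (ne_of_gt hpos), one_mul]
        linarith
      -- lower bound tends to 0
      have hM : ∀ n : ℕ, |π₁ ω - x + (u (φ n)).2| ≤ |π₁ ω - x| + max (x - π₀) 0 := by
        intro n
        have h1 := (hu (φ n)).2.1.1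
        have h2 := (hu (φ n)).2.1.2
        have : |(u (φ n)).2| ≤ max (x - π₀) 0 := by
          rw [abs_le]
          exact ⟨by linarith [le_max_right (x - π₀) 0], le_trans h2 (le_max_left _ _)⟩
        calc |π₁ ω - x + (u (φ n)).2| ≤ |π₁ ω - x| + |(u (φ n)).2| := abs_add_le _ _
          _ ≤ |π₁ ω - x| + max (x - π₀) 0 := by linarith
      have htend0 : Filter.Tendsto
          (fun n : ℕ => (π₁ ω - x + (u (φ n)).2) / ‖(u (φ n)).1‖) atTop (𝓝 0) := by
        refine squeeze_zero_norm' (a := fun n : ℕ => (|π₁ ω - x| + max (x - π₀) 0) / n) ?_ ?_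
        · filter_upwards [eventually_ge_atTop 1] with n hn
          have hn1 : (1:ℝ) ≤ (n:ℝ) := by exact_mod_cast hn
          have hφn : (n:ℝ) ≤ ‖(u (φ n)).1‖ := by
            have h1 : (n:ℝ) ≤ (φ n : ℝ) := by exact_mod_cast hφ.le_apply
            linarith [hHn (φ n)]
          rw [Real.norm_eq_abs, abs_div, abs_of_pos (hHpos (φ n))]
          apply div_le_div₀ (by positivity) (hM n) (by linarith) hφn
        · exact tendsto_const_div_atTop_nhds_zero_nat _
      have htendi : Filter.Tendsto (fun n : ℕ => ⟪G (φ n), ΔS ω⟫) atTop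
          (𝓝 ⟪g, ΔS ω⟫) := hgt.inner tendsto_const_nhds
      exact le_of_tendsto_of_tendsto' htend0 htendi hlow
    -- contradiction with no-arbitrage + hL
    have hgperp : g ∈ Lᗮ := hL g (hNA g hqs)
    have : ⟪g, g⟫ = 0 := (Submodule.mem_orthogonal L g).mp hgperp g hgL
    have hg0 : g = 0 := by
      rwa [inner_self_eq_zero] at this
    rw [hg0, norm_zero] at hgnorm
    norm_num at hgnorm
  exact ⟨hconv, hclosed, hbdd,
    Metric.isCompact_of_isClosed_isBounded hclosed hbdd⟩
end

section
/- Let (H_n)_{n ∈ ℕ} ⊆ ℝ^d with |H_n| → ∞, and suppose there exist random variables ΔS (ℝ^d-valued) and bounded quantities a_n, b_n with a_n + H_n·ΔS ≥ b_n P-a.s. for all n and all P ∈ 𝒫, where sup_n |a_n| < ∞ and sup_n |b_n| < ∞ on the relevant support. If additionally each H_n lies in the linear span L of the 𝒫-quasi-sure support of ΔS, and the no-arbitrage condition holds (H·ΔS ≥ 0 𝒫-q.s. ⟹ H·ΔS = 0 𝒫-q.s.), then a contradiction follows; equivalently, the set of H ∈ L satisfying a uniform superhedging inequality with bounded right-hand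 side is bounded. -/
open MeasureTheory Set Filter
open scoped RealInnerProductSpace

/-- Suppose `(H_n) ⊆ L` with `|H_n| → ∞`, satisfying the
uniform superhedging inequalities `a_n + H_n·ΔS ≥ b_n` `𝒫`-q.s. with `a_n`,
`b_n` uniformly bounded, where `L` is a subspace such that `H·ΔS = 0` q.s.
implies `H ∈ L^⊥`, and the no-arbitrage condition holds. Then a contradiction
follows. -/
theorem stmt12 {Ω : Type*} [MeasurableSpace Ω] {d : ℕ}
    (Pc : Set (Measure Ω)) (ΔS : Ω → EuclideanSpace ℝ (Fin d))
    (L : Submodule ℝ (EuclideanSpace ℝ (Fin d)))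
    (hL : ∀ H : EuclideanSpace ℝ (Fin d),
      QuasiSurely Pc (fun ω => ⟪H, ΔS ω⟫ = 0) → H ∈ Lᗮ)
    (hNA : ∀ H : EuclideanSpace ℝ (Fin d),
      QuasiSurely Pc (fun ω => 0 ≤ ⟪H, ΔS ω⟫) →
      QuasiSurely Pc (fun ω => ⟪H, ΔS ω⟫ = 0))
    (H : ℕ → EuclideanSpace ℝ (Fin d)) (hmem : ∀ n, H n ∈ L)
    (hnorm : Tendsto (fun n => ‖H n‖) atTop atTop)
    (a b : ℕ → ℝ) (hbdd : ∃ M : ℝ, ∀ n, |a n| ≤ M ∧ |b n| ≤ M)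
    (hineq : ∀ n, QuasiSurely Pc (fun ω => b n ≤ a n + ⟪H n, ΔS ω⟫)) :
    False := by
  obtain ⟨M, hM⟩ := hbdd
  have hM0 : 0 ≤ M := le_trans (abs_nonneg _) (hM 0).1
  -- eventually ‖H n‖ ≥ 1
  obtain ⟨N, hN⟩ := (hnorm.eventually_ge_atTop 1).exists_forall_of_atTop
  -- normalized sequence
  set u : ℕ → EuclideanSpace ℝ (Fin d) :=
    fun n => (‖H (n + N)‖)⁻¹ • H (n + N) with hu
  have hpos : ∀ n, (1 : ℝ) ≤ ‖H (n + N)‖ := fun n => hN _ (Nat.le_add_left _ _)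
  have hupos : ∀ n, 0 < ‖H (n + N)‖ := fun n => lt_of_lt_of_le one_pos (hpos n)
  have husphere : ∀ n, u n ∈ Metric.sphere (0 : EuclideanSpace ℝ (Fin d)) 1 := by
    intro n
    simp only [mem_sphere_iff_norm, sub_zero, hu, norm_smul, norm_inv, norm_norm]
    exact inv_mul_cancel₀ (ne_of_gt (hupos n))
  obtain ⟨x, hx, φ, hφ, hconv⟩ :=
    (isCompact_sphere (0 : EuclideanSpace ℝ (Fin d)) 1).tendsto_subseq husphere
  have hxnorm : ‖x‖ = 1 := by simpa using hx
  -- x ∈ L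
  have hxL : x ∈ L := by
    have hclosed : IsClosed (L : Set (EuclideanSpace ℝ (Fin d))) :=
      Submodule.closed_of_finiteDimensional L
    refine hclosed.mem_of_tendsto hconv (Eventually.of_forall fun k => ?_)
    exact L.smul_mem _ (hmem _)
  -- the normalized inner products converge to 0 from below q.s.
  have hqs : QuasiSurely Pc (fun ω => 0 ≤ ⟪x, ΔS ω⟫) := by
    intro P hP
    have hsub : {ω | ¬ 0 ≤ ⟪x, ΔS ω⟫} ⊆
        ⋃ n, {ω | ¬ b n ≤ a n + ⟪H n, ΔS ω⟫} := by
      intro ω hω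
      by_contra hc
      simp only [mem_iUnion, not_exists, Set.mem_setOf_eq, not_not] at hc
      apply hω
      -- limit of inner products
      have h1 : Tendsto (fun k => ⟪u (φ k), ΔS ω⟫) atTop (nhds ⟪x, ΔS ω⟫) :=
        hconv.inner tendsto_const_nhds
      have h2 : Tendsto (fun k => -(2 * M) * (‖H (φ k + N)‖)⁻¹) atTop (nhds 0) := by
        have : Tendsto (fun k => (‖H (φ k + N)‖)⁻¹) atTop (nhds 0) := by
          apply Tendsto.inv_tendsto_atTop
          exact hnorm.comp ((tendsto_add_atTop_nat N).comp hφ.tendsto_atTop)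
        simpa using this.const_mul (-(2 * M))
      refine le_of_tendsto_of_tendsto h2 h1 (Eventually.of_forall fun k => ?_)
      have hb : b (φ k + N) ≤ a (φ k + N) + ⟪H (φ k + N), ΔS ω⟫ := hc _
      have hbound : -(2 * M) ≤ ⟪H (φ k + N), ΔS ω⟫ := by
        have ha := (hM (φ k + N)).1
        have hbb := (hM (φ k + N)).2
        have := abs_le.mp ha
        have := abs_le.mp hbb
        linarith [hb, (abs_le.mp ha).1, (abs_le.mp ha).2,
          (abs_le.mp hbb).1, (abs_le.mp hbb).2]
      have heq : ⟪u (φ k), ΔS ω⟫ = (‖H (φ k + N)‖)⁻¹ * ⟪H (φ k + N), ΔS ω⟫ :=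
        real_inner_smul_left _ _ _
      show -(2 * M) * (‖H (φ k + N)‖)⁻¹ ≤ ⟪u (φ k), ΔS ω⟫
      rw [heq]
      calc -(2 * M) * (‖H (φ k + N)‖)⁻¹
          = (‖H (φ k + N)‖)⁻¹ * (-(2 * M)) := by ring
        _ ≤ (‖H (φ k + N)‖)⁻¹ * ⟪H (φ k + N), ΔS ω⟫ :=
            mul_le_mul_of_nonneg_left hbound (inv_nonneg.mpr (norm_nonneg _))
    refine measure_mono_null hsub (measure_iUnion_null fun n => hineq n P hP)
  -- conclude
  have hxperp : x ∈ Lᗮ := hL x (hNA x hqs)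
  have hx0 : x = 0 := inner_self_eq_zero.mp (hxperp x hxL)
  rw [hx0] at hxnorm
  simp at hxnorm
end
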